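/- Let γ, λ : [0,∞) → ℝ be C¹ with positive lower bounds, and define G(d) = (1−d)Q₊(d) − (1+d)Q₋(d) with Q±(d) = λ(1±d)γ(1±d)/(λ(1±d)+γ(1±d)). If τ := (γ(1)/λ(1))(λ'(1)−λ(1)) + (λ(1)/γ(1))(γ'(1)−γ(1)) > 0, then G has a root d̄ ∈ (0,1). -/

import Mathlib

/-- If τ > 0 then G has a root in (0,1). -/
theorem nonisotropic_steady_state_exists
    (γ lam : ℝ → ℝ) (γlo llo : ℝ) (hγlo : 0 < γlo) (hllo : 0 < llo)
    (hγC : ContDiffOn ℝ 1 γ (Set.Ici 0)) (hlC : ContDiffOn ℝ 1 lam (Set.Ici 0))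
    (hγ : ∀ ρ ≥ (0:ℝ), γlo ≤ γ ρ) (hl : ∀ ρ ≥ (0:ℝ), llo ≤ lam ρ)
    (Qp Qm G : ℝ → ℝ)
    (hQp : ∀ d, Qp d = lam (1 + d) * γ (1 + d) / (lam (1 + d) + γ (1 + d)))
    (hQm : ∀ d, Qm d = lam (1 - d) * γ (1 - d) / (lam (1 - d) + γ (1 - d)))
    (hG : ∀ d, G d = (1 - d) * Qp d - (1 + d) * Qm d)
    (hτ : 0 < γ 1 / lam 1 * (deriv lam 1 - lam 1)
            + lam 1 / γ 1 * (deriv γ 1 - γ 1)) :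
    ∃ d ∈ Set.Ioo (0:ℝ) 1, G d = 0 := by
  have hγpos : ∀ x ≥ (0:ℝ), 0 < γ x := fun x hx => lt_of_lt_of_le hγlo (hγ x hx)
  have hlpos : ∀ x ≥ (0:ℝ), 0 < lam x := fun x hx => lt_of_lt_of_le hllo (hl x hx)
  have hsum : ∀ x ≥ (0:ℝ), 0 < lam x + γ x :=
    fun x hx => add_pos (hlpos x hx) (hγpos x hx)
  set Q : ℝ → ℝ := fun x => lam x * γ x / (lam x + γ x) with hQdef
  have hGQ : ∀ d, G d = (1 - d) * Q (1 + d) - (1 + d) * Q (1 - d) := by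
    intro d; rw [hG, hQp, hQm]
  -- continuity of G on [0,1]
  have hlcont : ContinuousOn lam (Set.Ici 0) := hlC.continuousOn
  have hγcont : ContinuousOn γ (Set.Ici 0) := hγC.continuousOn
  have hQcont : ContinuousOn Q (Set.Ici 0) :=
    (hlcont.mul hγcont).div (hlcont.add hγcont) (fun x hx => (hsum x hx).ne')
  have hmap1 : Set.MapsTo (fun x : ℝ => 1 + x) (Set.Icc 0 1) (Set.Ici 0) := by
    intro x hx; have := hx.1; simp only [Set.mem_Ici]; linarith
  have hmap2 : Set.MapsTo (fun x : ℝ => 1 - x) (Set.Icc 0 1) (Set.Ici 0) := by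
    intro x hx; have := hx.2; simp only [Set.mem_Ici]; linarith
  have hc1 : ContinuousOn (fun x : ℝ => Q (1 + x)) (Set.Icc 0 1) :=
    hQcont.comp ((continuous_const.add continuous_id).continuousOn) hmap1
  have hc2 : ContinuousOn (fun x : ℝ => Q (1 - x)) (Set.Icc 0 1) :=
    hQcont.comp ((continuous_const.sub continuous_id).continuousOn) hmap2
  have hGcont : ContinuousOn G (Set.Icc 0 1) := by
    have h : ContinuousOn
        (fun d : ℝ => (1 - d) * Q (1 + d) - (1 + d) * Q (1 - d)) (Set.Icc 0 1) :=
      (((continuous_const.sub continuous_id).continuousOn).mul hc1).sub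
        (((continuous_const.add continuous_id).continuousOn).mul hc2)
    exact h.congr (fun x _ => hGQ x)
  -- differentiability of lam, γ at 1
  have hmem : Set.Ici (0:ℝ) ∈ nhds 1 := Ici_mem_nhds one_pos
  have hld : DifferentiableAt ℝ lam 1 :=
    (hlC.contDiffAt hmem).differentiableAt one_ne_zero
  have hγd : DifferentiableAt ℝ γ 1 :=
    (hγC.contDiffAt hmem).differentiableAt one_ne_zero
  set L := lam 1 with hL
  set g := γ 1 with hg
  set L' := deriv lam 1 with hL'
  set g' := deriv γ 1 with hg'
  have hLpos : 0 < L := hlpos 1 zero_le_one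
  have hgpos : 0 < g := hγpos 1 zero_le_one
  have hden : lam 1 + γ 1 ≠ 0 := (hsum 1 zero_le_one).ne'
  -- derivative of Q at 1
  set q' : ℝ := ((L' * g + L * g') * (L + g) - L * g * (L' + g')) / (L + g) ^ 2 with hq'
  have hQ1 : HasDerivAt Q q' 1 :=
    (hld.hasDerivAt.mul hγd.hasDerivAt).div (hld.hasDerivAt.add hγd.hasDerivAt) hden
  -- derivative of G at 0
  have hin1 : HasDerivAt (fun d : ℝ => 1 + d) 1 0 := by
    simpa using (hasDerivAt_id (0:ℝ)).const_add 1
  have hin2 : HasDerivAt (fun d : ℝ => 1 - d) (-1) 0 := by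
    simpa using (hasDerivAt_id (0:ℝ)).const_sub 1
  have hplus : HasDerivAt (fun d : ℝ => Q (1 + d)) (q' * 1) 0 := by
    have h1 : HasDerivAt Q q' ((fun d : ℝ => 1 + d) 0) := by simpa using hQ1
    exact h1.comp 0 hin1
  have hminus : HasDerivAt (fun d : ℝ => Q (1 - d)) (q' * (-1)) 0 := by
    have h1 : HasDerivAt Q q' ((fun d : ℝ => 1 - d) 0) := by simpa using hQ1
    exact h1.comp 0 hin2
  have hA : HasDerivAt (fun d : ℝ => (1 - d) * Q (1 + d))
      ((-1) * Q (1 + 0) + (1 - 0) * (q' * 1)) 0 := hin2.mul hplus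
  have hB : HasDerivAt (fun d : ℝ => (1 + d) * Q (1 - d))
      (1 * Q (1 - 0) + (1 + 0) * (q' * (-1))) 0 := hin1.mul hminus
  set c : ℝ := 2 * (q' - Q 1) with hc
  have hGd : HasDerivAt G c 0 := by
    have h := hA.sub hB
    have hGfun : G = fun d : ℝ => (1 - d) * Q (1 + d) - (1 + d) * Q (1 - d) :=
      funext hGQ
    rw [hGfun]
    convert h using 1
    norm_num [hc]
    · rfl
    · rfl
    · rfl
    · rw [hc]; simp only [add_zero, sub_zero]; ring
  -- c > 0
  have hQ1v : Q 1 = L * g / (L + g) := rfl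
  have hcpos : 0 < c := by
    have hτ' : 0 < g / L * (L' - L) + L / g * (g' - g) := hτ
    have hkey : c = 2 * (L * g * (g / L * (L' - L) + L / g * (g' - g))) / (L + g) ^ 2 := by
      rw [hc, hq', hQ1v]
      field_simp
      ring
    rw [hkey]
    positivity
  -- G 0 = 0
  have hG0 : G 0 = 0 := by rw [hGQ]; norm_num
  -- find small d with G d > 0
  have hslope := hasDerivAt_iff_tendsto_slope.mp hGd
  have hmono : nhdsWithin (0:ℝ) (Set.Ioi 0) ≤ nhdsWithin (0:ℝ) {(0:ℝ)}ᶜ :=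
    nhdsWithin_mono _ (fun x hx => ne_of_gt hx)
  have hev : ∀ᶠ d in nhdsWithin (0:ℝ) (Set.Ioi 0), 0 < slope G 0 d :=
    (hslope.mono_left hmono).eventually (lt_mem_nhds hcpos)
  have hlt1 : ∀ᶠ d in nhdsWithin (0:ℝ) (Set.Ioi 0), d < 1 :=
    mem_nhdsWithin_of_mem_nhds (Iio_mem_nhds one_pos)
  have hgt0 : ∀ᶠ d in nhdsWithin (0:ℝ) (Set.Ioi 0), 0 < d :=
    eventually_mem_nhdsWithin
  obtain ⟨d, ⟨hsl, hd1⟩, hd0⟩ := ((hev.and hlt1).and hgt0).exists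
  have hGdpos : 0 < G d := by
    have h1 : slope G 0 d = G d / d := by
      simp [slope_def_field, hG0]
    rw [h1] at hsl
    have := mul_pos hd0 hsl
    have h2 : d * (G d / d) = G d := by field_simp
    linarith [h2 ▸ this]
  -- G 1 < 0
  have hQ0pos : 0 < Q 0 :=
    div_pos (mul_pos (hlpos 0 le_rfl) (hγpos 0 le_rfl)) (hsum 0 le_rfl)
  have hG1 : G 1 < 0 := by
    have := hGQ 1
    norm_num at this
    rw [this]
    linarith
  -- IVT on [d, 1]
  have hsubIcc : Set.Icc d 1 ⊆ Set.Icc 0 1 :=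
    Set.Icc_subset_Icc (le_of_lt hd0) le_rfl
  have hIVT := intermediate_value_Ioo' (le_of_lt hd1) (hGcont.mono hsubIcc)
  have h0mem : (0:ℝ) ∈ Set.Ioo (G 1) (G d) := ⟨hG1, hGdpos⟩
  obtain ⟨x, hx, hGx⟩ := hIVT h0mem
  exact ⟨x, ⟨lt_trans hd0 hx.1, hx.2⟩, hGx⟩
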